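/- arXiv:2105.03880 — 3 statements merged into one kernel-verified Lean document; each statement's English description precedes it below -/
import Mathlib

section
/- Let m ≤ n be positive integers with s(m+n) = s(m) + s(n) (i.e., C(m+n,m) is odd). If ⌊m/2^i⌋ ≠ 0 for some i ≥ 1, then ⌊n/2^{i+1}⌋ ≠ 0. -/
def s (k : ℕ) : ℕ := padicValNat 2 (Nat.factorial k)

theorem div_ne_zero_succ (m n i : ℕ) (hm : 0 < m) (hmn : m ≤ n)
    (h : s (m + n) = s m + s n) (hi : 1 ≤ i) (hdiv : m / 2 ^ i ≠ 0) :
    n / 2 ^ (i + 1) ≠ 0 := by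
  haveI : Fact (Nat.Prime 2) := ⟨Nat.prime_two⟩
  intro hn0
  have hn : n < 2 ^ (i + 1) := (Nat.div_eq_zero_iff_lt (by positivity)).mp hn0
  have hm2 : 2 ^ i ≤ m := Nat.le_of_not_lt fun hlt => hdiv (Nat.div_eq_zero_iff_lt (by positivity) |>.mpr hlt)
  -- valuation of the binomial coefficient is zero
  have hfac : (m + n).factorial = (m + n).choose m * (m.factorial * n.factorial) := by
    rw [← mul_assoc, mul_right_comm, add_comm m n, Nat.add_choose_mul_factorial_mul_factorial]
  have hval : padicValNat 2 ((m + n).choose m) = 0 := by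
    have := padicValNat.mul (p := 2)
      (Nat.choose_pos (Nat.le_add_right m n)).ne' (by positivity : 0 < m.factorial * n.factorial).ne'
    have h2 := padicValNat.mul (p := 2) m.factorial_ne_zero n.factorial_ne_zero
    have hs : s (m + n) = padicValNat 2 ((m + n).choose m) + (s m + s n) := by
      unfold s
      rw [hfac, this, h2]
    omega
  -- Kummer: no carries
  have hb : Nat.log 2 (n + m) < Nat.log 2 (n + m) + 1 := Nat.lt_succ_self _
  have hk := padicValNat_choose' (p := 2) (k := m) (n := n) hb
  rw [add_comm n m, hval] at hk
  have hcard := hk.symm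
  have hmem : (i + 1) ∈ (Finset.Ico 1 (Nat.log 2 (m + n) + 1)).filter
      fun j => 2 ^ j ≤ m % 2 ^ j + n % 2 ^ j := by
    refine Finset.mem_filter.mpr ⟨Finset.mem_Ico.mpr ⟨by omega, ?_⟩, ?_⟩
    · have hle : 2 ^ (i + 1) ≤ n + m := by
        have : 2 ^ (i + 1) = 2 ^ i + 2 ^ i := by ring
        omega
      have := (Nat.le_log_iff_pow_le (by norm_num) (by omega : n + m ≠ 0)).mpr hle
      rw [add_comm n m] at this
      omega
    · have hmlt : m < 2 ^ (i + 1) := lt_of_le_of_lt hmn hn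
      rw [Nat.mod_eq_of_lt hmlt, Nat.mod_eq_of_lt hn]
      have : 2 ^ (i + 1) = 2 ^ i + 2 ^ i := by ring
      omega
  have := Finset.card_eq_zero.mp hcard
  rw [this] at hmem
  exact absurd hmem (Finset.notMem_empty _)
end

section
/- Let m ≤ n be positive integers such that the binomial coefficient C(m+n, m) is odd. If 2^t ≤ m+n for some t ≥ 1 (i.e., ⌊(m+n)/2^t⌋ ≠ 0), then n ≥ 2^t. In particular, if both m,n ≥ 1, then m < n. -/
open Nat Finset

lemma no_carry_of_choose_odd (m n : ℕ) (h : Odd (Nat.choose (m + n) m))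
    (t : ℕ) (ht : 1 ≤ t) (htmn : 2 ^ t ≤ m + n) :
    m % 2 ^ t + n % 2 ^ t < 2 ^ t := by
  by_contra hc
  push_neg at hc
  have hmn0 : m + n ≠ 0 := by omega
  have hb : Nat.log 2 (n + m) < Nat.log 2 (n + m) + 1 := Nat.lt_succ_self _
  have key := Nat.Prime.emultiplicity_choose' (p := 2) (n := n) (k := m)
    (b := Nat.log 2 (n + m) + 1) Nat.prime_two hb
  have hodd : ¬ (2 ∣ Nat.choose (n + m) m) := by
    rw [add_comm n m]
    have := Nat.odd_iff.mp h
    omega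
  have hzero : emultiplicity 2 (Nat.choose (n + m) m) = 0 :=
    emultiplicity_eq_zero.mpr hodd
  rw [hzero] at key
  have ht' : t ∈ Finset.Ico 1 (Nat.log 2 (n + m) + 1) := by
    rw [Finset.mem_Ico]
    refine ⟨ht, ?_⟩
    have : t ≤ Nat.log 2 (n + m) := by
      rw [Nat.le_log_iff_pow_le one_lt_two (by omega)]
      omega
    omega
  have : t ∈ {i ∈ Finset.Ico 1 (Nat.log 2 (n + m) + 1) | 2 ^ i ≤ m % 2 ^ i + n % 2 ^ i} := by
    simp only [Finset.mem_filter]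
    exact ⟨ht', hc⟩
  have hcard : ({i ∈ Finset.Ico 1 (Nat.log 2 (n + m) + 1) |
      2 ^ i ≤ m % 2 ^ i + n % 2 ^ i} : Finset ℕ).card ≠ 0 :=
    Finset.card_ne_zero_of_mem this
  have : ((#{i ∈ Finset.Ico 1 (Nat.log 2 (n + m) + 1) |
      2 ^ i ≤ m % 2 ^ i + n % 2 ^ i} : ℕ) : ℕ∞) = 0 := key.symm
  rw [Nat.cast_eq_zero] at this
  exact hcard this

theorem ge_pow_of_choose_odd (m n : ℕ) (hm : 0 < m) (hmn : m ≤ n)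
    (h : Odd (Nat.choose (m + n) m)) :
    (∀ t : ℕ, 1 ≤ t → 2 ^ t ≤ m + n → 2 ^ t ≤ n) ∧ m < n := by
  have main : ∀ t : ℕ, 1 ≤ t → 2 ^ t ≤ m + n → 2 ^ t ≤ n := by
    intro t ht htmn
    by_contra hn
    push_neg at hn
    have hm' : m < 2 ^ t := lt_of_le_of_lt hmn hn
    have := no_carry_of_choose_odd m n h t ht htmn
    rw [Nat.mod_eq_of_lt hm', Nat.mod_eq_of_lt hn] at this
    omega
  refine ⟨main, ?_⟩
  set t := Nat.log 2 (m + n) with htdef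
  have hmn2 : 2 ≤ m + n := by omega
  have ht1 : 1 ≤ t := by
    rw [htdef, Nat.le_log_iff_pow_le one_lt_two (by omega)]
    simpa using hmn2
  have hle : 2 ^ t ≤ m + n := Nat.pow_log_le_self 2 (by omega)
  have hlt : m + n < 2 ^ (t + 1) := Nat.lt_pow_succ_log_self one_lt_two _
  have := main t ht1 hle
  have : 2 ^ (t + 1) = 2 * 2 ^ t := by ring
  omega
end

section
/- The subgroup S_m × S_{m-1} has odd index in S_{2m-1} if and only if m is a power of 2. -/
open scoped Pointwise

lemma choose_odd_iff_pow_two (m : ℕ) (hm : 1 ≤ m) :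
    Odd ((2 * m - 1).choose (m - 1)) ↔ ∃ ℓ : ℕ, m = 2 ^ ℓ := by
  have hkn : m - 1 ≤ 2 * m - 1 := by omega
  have hsub : 2 * m - 1 - (m - 1) = m := by omega
  have hlog : Nat.log 2 (2 * m - 1) < 2 * m := by
    refine (Nat.log_lt_iff_lt_pow one_lt_two (by omega)).mpr ?_
    calc 2 * m - 1 < 2 * m := by omega
    _ < 2 ^ (2 * m) := Nat.lt_two_pow_self
  have key := Nat.Prime.emultiplicity_choose Nat.prime_two hkn hlog
  rw [hsub] at key
  rw [Nat.odd_iff, ← Nat.two_dvd_ne_zero, ← emultiplicity_eq_zero, key,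
    Nat.cast_eq_zero, Finset.card_eq_zero, Finset.filter_eq_empty_iff]
  constructor
  · intro h
    by_contra hpow
    push_neg at hpow
    set k := Nat.log 2 m with hk
    have h1 : 2 ^ k ≤ m := Nat.pow_log_le_self 2 (by omega)
    have h2 : m < 2 ^ (k + 1) := Nat.lt_pow_succ_log_self one_lt_two m
    have h3 : 2 ^ k < m := lt_of_le_of_ne h1 (fun h => (hpow k h.symm))
    have hklt : k < 2 ^ k := Nat.lt_two_pow_self
    have hmem : k + 1 ∈ Finset.Ico 1 (2 * m) := by
      rw [Finset.mem_Ico]; omega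
    have := h hmem
    rw [Nat.mod_eq_of_lt (by omega), Nat.mod_eq_of_lt h2] at this
    have hp : 2 ^ (k + 1) = 2 * 2 ^ k := by ring
    omega
  · rintro ⟨ℓ, rfl⟩ i hi
    rw [Finset.mem_Ico] at hi
    rcases le_or_gt i ℓ with hiℓ | hℓi
    · have h0 : 2 ^ ℓ % 2 ^ i = 0 := Nat.mod_eq_zero_of_dvd (pow_dvd_pow 2 hiℓ)
      have h1 : (2 ^ ℓ - 1) % 2 ^ i < 2 ^ i := Nat.mod_lt _ (Nat.pow_pos (n := i) two_pos)
      omega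
    · have e1 : 2 ^ (ℓ + 1) ≤ 2 ^ i := Nat.pow_le_pow_right two_pos hℓi
      have e2 : 2 ^ (ℓ + 1) = 2 * 2 ^ ℓ := by ring
      have e3 : 1 ≤ 2 ^ ℓ := Nat.one_le_two_pow
      rw [Nat.mod_eq_of_lt (by omega), Nat.mod_eq_of_lt (by omega)]
      omega

theorem odd_index_iff_pow_two (m : ℕ) (hm : 1 ≤ m)
    (Δ : Finset (Fin (2 * m - 1))) (hΔ : Δ.card = m - 1) :
    Odd (MulAction.stabilizer (Equiv.Perm (Fin (2 * m - 1))) Δ).index ↔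
      ∃ ℓ : ℕ, m = 2 ^ ℓ := by
  classical
  have hcard : (MulAction.stabilizer (Equiv.Perm (Fin (2 * m - 1))) Δ).index
      = (2 * m - 1).choose (m - 1) := by
    rw [MulAction.index_stabilizer]
    have horb : MulAction.orbit (Equiv.Perm (Fin (2 * m - 1))) Δ
        = {s : Finset (Fin (2 * m - 1)) | s.card = m - 1} := by
      ext s
      simp only [Set.mem_setOf_eq, MulAction.mem_orbit_iff]
      constructor
      · rintro ⟨g, rfl⟩
        rw [Finset.card_smul_finset, hΔ]
      · intro hs
        have hc : Fintype.card Δ = Fintype.card s := by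
          rw [Fintype.card_coe, Fintype.card_coe, hΔ, hs]
        let e := Fintype.equivOfCardEq hc
        refine ⟨e.extendSubtype, ?_⟩
        apply Finset.eq_of_subset_of_card_le
        · intro x hx
          rw [Finset.mem_smul_finset] at hx
          obtain ⟨y, hy, rfl⟩ := hx
          exact e.extendSubtype_mem y hy
        · rw [Finset.card_smul_finset, hΔ, hs]
    rw [horb, ← Nat.card_coe_set_eq, Nat.card_eq_fintype_card]
    have : Fintype.card {s : Finset (Fin (2 * m - 1)) // s.card = m - 1}
        = (2 * m - 1).choose (m - 1) := by
      rw [Fintype.card_finset_len, Fintype.card_fin]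
    exact this.trans rfl ▸ this
  rw [hcard, choose_odd_iff_pow_two m hm]
end
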